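/- For all real numbers x, y with 0 < x < y < 1, there exists a unique z ∈ (x, y) such that kl(z, x) = kl(z, y), where kl denotes the binary relative entropy. (This unique z is used to define the Chernoff information d*(x,y) := kl(z, x) between two Bernoulli distributions of means x and y.) -/

import Mathlib

/-- Binary relative entropy. -/
noncomputable def klBern (x y : ℝ) : ℝ :=
  x * Real.log (x / y) + (1 - x) * Real.log ((1 - x) / (1 - y))

/-- For `0 < x < y < 1` there is a unique `z ∈ (x,y)` with `kl(z,x) = kl(z,y)`:
the Chernoff information `d*(x,y) := kl(z,x)` is well defined. -/
theorem stmt_9 (x y : ℝ) (hx : 0 < x) (hxy : x < y) (hy : y < 1) :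
    ∃! z : ℝ, z ∈ Set.Ioo x y ∧ klBern z x = klBern z y := by
  have hx1 : x < 1 := hxy.trans hy
  have hy0 : 0 < y := hx.trans hxy
  have h1x : (0:ℝ) < 1 - x := by linarith
  have h1y : (0:ℝ) < 1 - y := by linarith
  set a : ℝ := Real.log y - Real.log x with ha
  set b : ℝ := Real.log (1 - y) - Real.log (1 - x) with hb
  -- the difference is affine in w
  have hdiff : ∀ w : ℝ, 0 < w → w < 1 →
      klBern w x - klBern w y = w * (a - b) + b := by
    intro w hw0 hw1
    have h1w : (0:ℝ) < 1 - w := by linarith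
    simp only [klBern, Real.log_div hw0.ne' hx.ne', Real.log_div hw0.ne' hy0.ne',
      Real.log_div h1w.ne' h1x.ne', Real.log_div h1w.ne' h1y.ne', ha, hb]
    ring
  -- slope positivity
  have hab : a > 0 := by
    have := Real.log_lt_log hx hxy
    linarith
  have hba : b < 0 := by
    have := Real.log_lt_log h1y (by linarith : 1 - y < 1 - x)
    linarith
  have hs : 0 < a - b := by linarith
  -- value at x is negative
  have hfx : x * (a - b) + b < 0 := by
    have h1 : Real.log (y / x) < y / x - 1 :=
      Real.log_lt_sub_one_of_pos (div_pos hy0 hx) (by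
        intro h
        have : y = x := by field_simp at h; linarith
        linarith)
    have h2 : Real.log ((1 - y) / (1 - x)) < (1 - y) / (1 - x) - 1 :=
      Real.log_lt_sub_one_of_pos (div_pos h1y h1x) (by
        intro h
        have : (1 - y) = (1 - x) := by field_simp at h; linarith
        linarith)
    rw [Real.log_div hy0.ne' hx.ne'] at h1
    rw [Real.log_div h1y.ne' h1x.ne'] at h2
    have e1 : x * a < y - x := by
      have h := mul_lt_mul_of_pos_left h1 hx
      have hq : x * (y / x - 1) = y - x := by field_simp
      nlinarith [h, hq]
    have e2 : (1 - x) * b < x - y := by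
      have h := mul_lt_mul_of_pos_left h2 h1x
      have hq : (1 - x) * ((1 - y) / (1 - x) - 1) = x - y := by field_simp; ring
      nlinarith [h, hq]
    nlinarith [e1, e2]
  -- value at y is positive
  have hfy : 0 < y * (a - b) + b := by
    have h1 : Real.log (x / y) < x / y - 1 :=
      Real.log_lt_sub_one_of_pos (div_pos hx hy0) (by
        intro h
        have : x = y := by field_simp at h; linarith
        linarith)
    have h2 : Real.log ((1 - x) / (1 - y)) < (1 - x) / (1 - y) - 1 :=
      Real.log_lt_sub_one_of_pos (div_pos h1x h1y) (by
        intro h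
        have : (1 - x) = (1 - y) := by field_simp at h; linarith
        linarith)
    rw [Real.log_div hx.ne' hy0.ne'] at h1
    rw [Real.log_div h1x.ne' h1y.ne'] at h2
    have e1 : y - x < y * a := by
      have h := mul_lt_mul_of_pos_left h1 hy0
      have hq : y * (x / y - 1) = x - y := by field_simp
      nlinarith [h, hq]
    have e2 : x - y < (1 - y) * b := by
      have h := mul_lt_mul_of_pos_left h2 h1y
      have hq : (1 - y) * ((1 - x) / (1 - y) - 1) = y - x := by field_simp; ring
      nlinarith [h, hq]
    nlinarith [e1, e2]
  refine ⟨-b / (a - b), ⟨⟨?_, ?_⟩, ?_⟩, ?_⟩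
  · rw [lt_div_iff₀ hs]; linarith
  · rw [div_lt_iff₀ hs]; linarith
  · have hz0 : 0 < -b / (a - b) := by
      have : x < -b / (a - b) := by rw [lt_div_iff₀ hs]; linarith
      linarith
    have hz1 : -b / (a - b) < 1 := by
      have : -b / (a - b) < y := by rw [div_lt_iff₀ hs]; linarith
      linarith
    have := hdiff (-b / (a - b)) hz0 hz1
    have hval : (-b / (a - b)) * (a - b) + b = 0 := by
      field_simp
      ring
    linarith [this, hval]
  · rintro w ⟨⟨hw1, hw2⟩, hw3⟩
    have hw0 : 0 < w := hx.trans hw1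
    have hw1' : w < 1 := hw2.trans hy
    have := hdiff w hw0 hw1'
    have : w * (a - b) + b = 0 := by linarith [this, hw3]
    field_simp
    linarith [this]
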